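/- For every integer M ≥ 1, the tail of the dyadic–triadic potential summed over the box Λ_{2^M} satisfies ∑_{n ∈ Λ_{2^M}} ∑_{m=M+1}^∞ 3^{−p_m(n)} ≤ (3/2)·3^{−(2^{d(M+1)}−2^d)/(2^d−1)}. (The exponent (2^{d(M+1)}−2^d)/(2^d−1) = 2^d·(2^{dM}−1)/(2^d−1) is a non-negative integer.) -/

import Mathlib

/-- `bdig k n` is the `k`-th binary digit of the integer `n` (floor division). -/
def bdig (k : ℕ) (n : ℤ) : ℤ := (n / 2 ^ k) % 2

/-- `pm d m n = (∑_{k=0}^{m-1} 2^{dk}(1 + ∑_{j=1}^d 2^{j-1} b_k(n_j))) - 1`. -/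
def pm (d m : ℕ) (n : Fin d → ℤ) : ℤ :=
  (∑ k ∈ Finset.range m, 2 ^ (d * k) * (1 + ∑ j : Fin d, 2 ^ (j : ℕ) * bdig k (n j))) - 1

/-- The "low bits" part of `pm` over the box of side `2^M`, as a natural number. -/
def srho (d M : ℕ) (ν : Fin d → ℕ) : ℕ :=
  ∑ k ∈ Finset.range M, 2 ^ (d*k) * ∑ j : Fin d, 2 ^ (j:ℕ) * (ν j / 2 ^ k % 2)

lemma bdig_natCast (k ν : ℕ) : bdig k (ν : ℤ) = ((ν / 2 ^ k % 2 : ℕ) : ℤ) := by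
  unfold bdig; push_cast; ring

lemma nbin_recon : ∀ (M ν : ℕ), ν < 2 ^ M → ∑ k ∈ Finset.range M, 2 ^ k * (ν / 2 ^ k % 2) = ν := by
  intro M
  induction M with
  | zero => intro ν h; interval_cases ν; simp
  | succ M ih =>
    intro ν h
    have hp : (2:ℕ) ^ (M+1) = 2 * 2 ^ M := by ring
    have h2 : ν / 2 < 2 ^ M := by omega
    have key : ∀ k : ℕ, 2 ^ (k+1) * (ν / 2 ^ (k+1) % 2) = 2 * (2 ^ k * ((ν/2) / 2 ^ k % 2)) := by
      intro k
      rw [pow_succ', ← Nat.div_div_eq_div_mul]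
      ring
    rw [Finset.sum_range_succ']
    simp only [key]
    rw [← Finset.mul_sum, ih (ν/2) h2]
    simp only [pow_zero, one_mul, Nat.div_one]
    omega

lemma nbits_inj : ∀ (N : ℕ) (ε ε' : ℕ → ℕ), (∀ i, ε i ≤ 1) → (∀ i, ε' i ≤ 1) →
    (∑ i ∈ Finset.range N, 2 ^ i * ε i = ∑ i ∈ Finset.range N, 2 ^ i * ε' i) →
    ∀ i < N, ε i = ε' i := by
  intro N
  induction N with
  | zero => intro _ _ _ _ _ i hi; omega
  | succ N ih =>
    intro ε ε' h h' hs i hi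
    rw [Finset.sum_range_succ', Finset.sum_range_succ'] at hs
    have e1 : ∀ (δ : ℕ → ℕ), ∑ i ∈ Finset.range N, 2 ^ (i+1) * δ (i+1)
        = 2 * ∑ i ∈ Finset.range N, 2 ^ i * δ (i+1) := by
      intro δ; rw [Finset.mul_sum]; apply Finset.sum_congr rfl; intros; ring
    rw [e1 ε, e1 ε'] at hs
    simp only [pow_zero, one_mul] at hs
    have h0 := h 0; have h0' := h' 0
    have hA : ∑ i ∈ Finset.range N, 2 ^ i * ε (i+1) = ∑ i ∈ Finset.range N, 2 ^ i * ε' (i+1) := by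
      omega
    rcases i with _ | i
    · omega
    · exact ih (fun i => ε (i+1)) (fun i => ε' (i+1)) (fun i => h _) (fun i => h' _) hA i (by omega)

lemma nbits_lt (N : ℕ) (ε : ℕ → ℕ) (h : ∀ i, ε i ≤ 1) :
    ∑ i ∈ Finset.range N, 2 ^ i * ε i < 2 ^ N := by
  induction N with
  | zero => simp
  | succ N ih =>
    rw [Finset.sum_range_succ, pow_succ]
    have h1 : 2 ^ N * ε N ≤ 2 ^ N * 1 := Nat.mul_le_mul_left _ (h N)
    omega

lemma reindex (d : ℕ) (hd : 0 < d) (ε : ℕ → ℕ → ℕ) (M : ℕ) :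
    ∑ k ∈ Finset.range M, 2 ^ (d*k) * ∑ j ∈ Finset.range d, 2 ^ j * ε k j
      = ∑ i ∈ Finset.range (d*M), 2 ^ i * ε (i / d) (i % d) := by
  induction M with
  | zero => simp
  | succ M ih =>
    rw [Finset.sum_range_succ, ih]
    have hdm : d * (M+1) = d*M + d := by ring
    rw [hdm]
    rw [Finset.range_eq_Ico, Finset.range_eq_Ico (a := d*M + d),
      ← Finset.sum_Ico_consecutive (fun i => 2 ^ i * ε (i / d) (i % d))
        (Nat.zero_le (d*M)) (by omega : d*M ≤ d*M + d)]
    rw [← Finset.range_eq_Ico]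
    congr 1
    rw [Finset.sum_Ico_eq_sum_range]
    have hdd : d*M + d - d*M = d := by omega
    rw [hdd, Finset.mul_sum]
    apply Finset.sum_congr rfl
    intro t ht
    rw [Finset.mem_range] at ht
    have h1 : (d*M + t)/d = M := by
      simp [Nat.mul_add_div hd, Nat.div_eq_of_lt ht]
    have h2 : (d*M + t) % d = t := by
      rw [Nat.mul_add_mod]; exact Nat.mod_eq_of_lt ht
    rw [h1, h2, pow_add]
    ring

lemma srho_eq (d : ℕ) (hd : 0 < d) (M : ℕ) (ν : Fin d → ℕ) :
    srho d M ν = ∑ i ∈ Finset.range (d*M),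
      2 ^ i * (ν ⟨i % d % d, Nat.mod_lt _ hd⟩ / 2 ^ (i / d) % 2) := by
  unfold srho
  rw [← reindex d hd (fun k j => ν ⟨j % d, Nat.mod_lt _ hd⟩ / 2 ^ k % 2) M]
  apply Finset.sum_congr rfl
  intro k _
  congr 1
  rw [← Fin.sum_univ_eq_sum_range (fun j => 2 ^ j * (ν ⟨j % d, Nat.mod_lt _ hd⟩ / 2 ^ k % 2)) d]
  apply Finset.sum_congr rfl
  intro j _
  have hj : (⟨(j:ℕ) % d, Nat.mod_lt _ hd⟩ : Fin d) = j := by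
    apply Fin.ext; exact Nat.mod_eq_of_lt j.isLt
  rw [hj]

lemma srho_lt (d : ℕ) (hd : 0 < d) (M : ℕ) (ν : Fin d → ℕ) :
    srho d M ν < 2 ^ (d*M) := by
  rw [srho_eq d hd M ν]
  exact nbits_lt _ _ (fun i => by omega)

lemma srho_inj (d : ℕ) (hd : 0 < d) (M : ℕ) (ν ν' : Fin d → ℕ)
    (hν : ∀ j, ν j < 2 ^ M) (hν' : ∀ j, ν' j < 2 ^ M)
    (h : srho d M ν = srho d M ν') : ν = ν' := by
  rw [srho_eq d hd M ν, srho_eq d hd M ν'] at h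
  have hdig := nbits_inj _ _ _ (fun i => by omega) (fun i => by omega) h
  funext j
  rw [← nbin_recon M (ν j) (hν j), ← nbin_recon M (ν' j) (hν' j)]
  apply Finset.sum_congr rfl
  intro k hk
  rw [Finset.mem_range] at hk
  have hi : d * k + (j:ℕ) < d * M := by
    have hjd : (j:ℕ) < d := j.isLt
    have e1 : d * (k+1) = d*k + d := by ring
    have e2 : d * (k+1) ≤ d * M := Nat.mul_le_mul_left d (by omega)
    omega
  have := hdig (d * k + (j:ℕ)) hi
  have h1 : (d * k + (j:ℕ)) / d = k := by
    simp [Nat.mul_add_div hd, Nat.div_eq_of_lt j.isLt]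
  have h2 : (d * k + (j:ℕ)) % d = (j:ℕ) := by
    rw [Nat.mul_add_mod]; exact Nat.mod_eq_of_lt j.isLt
  rw [h1, h2] at this
  have hj : (⟨(j:ℕ) % d, Nat.mod_lt _ hd⟩ : Fin d) = j := by
    apply Fin.ext; exact Nat.mod_eq_of_lt j.isLt
  rw [hj] at this
  rw [this]

lemma pm_formula (d M m : ℕ) (hm : M ≤ m) (ν : Fin d → ℕ) (hν : ∀ j, ν j < 2 ^ M) :
    pm d m (fun j => (ν j : ℤ))
      = (∑ k ∈ Finset.range m, (2:ℤ) ^ (d*k)) - 1 + (srho d M ν : ℤ) := by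
  unfold pm
  simp only [bdig_natCast]
  have step : ∀ k, (2:ℤ) ^ (d*k) * (1 + ∑ j : Fin d, 2 ^ (j:ℕ) * ((ν j / 2 ^ k % 2 : ℕ) : ℤ))
      = 2 ^ (d*k) + 2 ^ (d*k) * ∑ j : Fin d, 2 ^ (j:ℕ) * ((ν j / 2 ^ k % 2 : ℕ) : ℤ) := by
    intro k; ring
  simp only [step]
  rw [Finset.sum_add_distrib]
  have trunc : ∑ k ∈ Finset.range m, (2:ℤ) ^ (d*k) * ∑ j : Fin d, 2 ^ (j:ℕ) * ((ν j / 2 ^ k % 2 : ℕ) : ℤ)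
      = ∑ k ∈ Finset.range M, (2:ℤ) ^ (d*k) * ∑ j : Fin d, 2 ^ (j:ℕ) * ((ν j / 2 ^ k % 2 : ℕ) : ℤ) := by
    symm
    apply Finset.sum_subset
    · exact Finset.range_subset_range.mpr hm
    · intro k _ hk
      rw [Finset.mem_range, not_lt] at hk
      have hz : ∀ j : Fin d, ν j / 2 ^ k = 0 := by
        intro j
        apply Nat.div_eq_of_lt
        exact lt_of_lt_of_le (hν j) (Nat.pow_le_pow_right (by norm_num) hk)
      simp [hz]
  rw [trunc]
  have : (srho d M ν : ℤ)
      = ∑ k ∈ Finset.range M, (2:ℤ) ^ (d*k) * ∑ j : Fin d, 2 ^ (j:ℕ) * ((ν j / 2 ^ k % 2 : ℕ) : ℤ) := by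
    unfold srho; push_cast; ring
  rw [this]; ring

lemma Ekey (d M : ℕ) (hd : 1 ≤ d) :
    (2 ^ (d * (M + 1)) - 2 ^ d) / (2 ^ d - 1) + 1 = ∑ k ∈ Finset.range (M+1), 2 ^ (d*k) := by
  set x : ℕ := 2 ^ d with hx
  have hx2 : 2 ≤ x := by
    calc 2 = 2 ^ 1 := by norm_num
    _ ≤ 2 ^ d := Nat.pow_le_pow_right (by norm_num) hd
  have hpm : ∀ k : ℕ, (2:ℕ) ^ (d * k) = x ^ k := fun k => by rw [hx, ← pow_mul]
  have hdvd : (x - 1) ∣ (x ^ M - 1 ^ M) := Nat.sub_dvd_pow_sub_pow x 1 M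
  rw [one_pow] at hdvd
  obtain ⟨c, hc⟩ := hdvd
  have hxM : 1 ≤ x ^ M := Nat.one_le_pow _ _ (by omega)
  have hxM1 : x ≤ x ^ (M+1) := by
    calc x = x ^ 1 := (pow_one x).symm
    _ ≤ x ^ (M+1) := Nat.pow_le_pow_right (by omega) (by omega)
  have hZ : (x:ℤ) ^ (M+1) - x = (x * c) * (x - 1) := by
    have hcZ : (x:ℤ) ^ M - 1 = ((x:ℤ) - 1) * c := by
      have := congrArg (fun t : ℕ => (t:ℤ)) hc
      push_cast [Nat.cast_sub hxM, Nat.cast_sub (by omega : 1 ≤ x)] at this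
      · linarith [this]
    linear_combination (x:ℤ) * hcZ
  have hN : x ^ (M+1) - x = (x * c) * (x - 1) := by
    have : ((x ^ (M+1) - x : ℕ) : ℤ) = ((x * c) * (x - 1) : ℕ) := by
      push_cast [Nat.cast_sub hxM1, Nat.cast_sub (by omega : 1 ≤ x)]
      linarith [hZ]
    exact_mod_cast this
  have hdiv : (x ^ (M+1) - x) / (x - 1) = x * c := by
    rw [hN]; exact Nat.mul_div_cancel _ (by omega)
  have hgS : ∑ k ∈ Finset.range (M+1), x ^ k = x * c + 1 := by
    have hg : ((∑ k ∈ Finset.range (M+1), x ^ k : ℕ) : ℤ) * ((x:ℤ) - 1)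
        = (x:ℤ) ^ (M+1) - 1 := by
      push_cast
      exact geom_sum_mul (x:ℤ) (M+1)
    have h2 : ((x * c + 1 : ℕ) : ℤ) * ((x:ℤ) - 1) = (x:ℤ) ^ (M+1) - 1 := by
      push_cast
      linear_combination -hZ
    have := mul_right_cancel₀ (b := (x:ℤ) - 1) (by
      have : (2:ℤ) ≤ x := by exact_mod_cast hx2
      omega) (hg.trans h2.symm)
    exact_mod_cast this
  simp only [hpm]
  rw [hgS, ← hdiv]

/-- For `M ≥ 1`, the tail of the dyadic–triadic potential summed over
the box `Λ_{2^M}` satisfies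
`∑_{n ∈ Λ_{2^M}} ∑_{m=M+1}^∞ 3^{−p_m(n)} ≤ (3/2)·3^{−(2^{d(M+1)}−2^d)/(2^d−1)}`. -/
theorem stmt_11 (d : ℕ) (hd : 1 ≤ d) (M : ℕ) (hM : 1 ≤ M) :
    ∑ n ∈ Fintype.piFinset (fun _ : Fin d => Finset.Ico (0 : ℤ) (2 ^ M)),
        ∑' k : ℕ, (3 : ℝ) ^ (-(pm d (M + 1 + k) n)) ≤
      (3 / 2) * (3 : ℝ) ^ (-(((2 ^ (d * (M + 1)) - 2 ^ d) / (2 ^ d - 1) : ℕ) : ℤ)) := by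
  classical
  set B := Fintype.piFinset (fun _ : Fin d => Finset.Ico (0 : ℤ) (2 ^ M)) with hB
  set E : ℕ := (2 ^ (d * (M + 1)) - 2 ^ d) / (2 ^ d - 1) with hEdef
  have hE1 : E + 1 = ∑ k ∈ Finset.range (M+1), 2 ^ (d*k) := Ekey d M hd
  set D : ℕ → ℕ := fun k => ∑ t ∈ Finset.Ico (M+1) (M+1+k), 2 ^ (d*t) with hDdef
  -- sums of powers split
  have hS : ∀ k : ℕ, ∑ t ∈ Finset.range (M+1+k), (2:ℕ) ^ (d*t) = (E + 1) + D k := by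
    intro k
    rw [hE1, hDdef]
    rw [Finset.range_eq_Ico]
    simpa using (Finset.sum_Ico_consecutive (fun t => (2:ℕ) ^ (d*t))
      (Nat.zero_le (M+1)) (by omega : M+1 ≤ M+1+k)).symm
  -- membership facts
  have hmem : ∀ n ∈ B, ∀ j : Fin d, 0 ≤ n j ∧ n j < 2 ^ M := by
    intro n hn j
    rw [hB, Fintype.mem_piFinset] at hn
    have := hn j
    rw [Finset.mem_Ico] at this
    exact this
  have hν_lt : ∀ n ∈ B, ∀ j : Fin d, (n j).toNat < 2 ^ M := by
    intro n hn j
    have h1 := hmem n hn j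
    have h2 : ((2:ℤ) ^ M) = ((2 ^ M : ℕ) : ℤ) := by push_cast; ring
    rw [h2] at h1
    omega
  have hν_cast : ∀ n ∈ B, (fun j => (((n j).toNat : ℕ) : ℤ)) = n := by
    intro n hn
    funext j
    have h1 := hmem n hn j
    omega
  -- pm formula on the box
  have hpm : ∀ n ∈ B, ∀ k : ℕ,
      pm d (M+1+k) n = (E : ℤ) + ((D k + srho d M (fun j => (n j).toNat) : ℕ) : ℤ) := by
    intro n hn k
    have h0 : pm d (M+1+k) n = pm d (M+1+k) (fun j => (((n j).toNat : ℕ) : ℤ)) := by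
      rw [hν_cast n hn]
    rw [h0, pm_formula d M (M+1+k) (by omega) _ (hν_lt n hn)]
    have hZc : (∑ t ∈ Finset.range (M+1+k), (2:ℤ) ^ (d*t))
        = ((∑ t ∈ Finset.range (M+1+k), 2 ^ (d*t) : ℕ) : ℤ) := by
      push_cast; ring
    rw [hZc, hS k]
    push_cast
    ring
  -- the key injection
  set e : {n // n ∈ B} × ℕ → ℕ :=
    fun p => D p.2 + srho d M (fun j => ((p.1 : Fin d → ℤ) j).toNat) with hedef
  have hDgap : ∀ k k' : ℕ, k < k' → D k + 2 ^ (d*(M+1)) ≤ D k' := by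
    intro k k' hkk
    have hsplit : D k + ∑ t ∈ Finset.Ico (M+1+k) (M+1+k'), 2 ^ (d*t) = D k' := by
      rw [hDdef]
      exact Finset.sum_Ico_consecutive (fun t => 2 ^ (d*t)) (by omega) (by omega)
    have hsingle : 2 ^ (d*(M+1+k)) ≤ ∑ t ∈ Finset.Ico (M+1+k) (M+1+k'), 2 ^ (d*t) :=
      Finset.single_le_sum (f := fun t => 2 ^ (d*t)) (fun t _ => Nat.zero_le _)
        (Finset.mem_Ico.mpr ⟨le_refl _, by omega⟩)
    have hmono : 2 ^ (d*(M+1)) ≤ 2 ^ (d*(M+1+k)) :=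
      Nat.pow_le_pow_right (by norm_num) (Nat.mul_le_mul_left d (by omega))
    omega
  have h2dM : 2 ^ (d*M) ≤ 2 ^ (d*(M+1)) :=
    Nat.pow_le_pow_right (by norm_num) (Nat.mul_le_mul_left d (by omega))
  have einj : Function.Injective e := by
    intro p q hpq
    rw [hedef] at hpq
    simp only at hpq
    have hrp := srho_lt d (by omega) M (fun j => ((p.1 : Fin d → ℤ) j).toNat)
    have hrq := srho_lt d (by omega) M (fun j => ((q.1 : Fin d → ℤ) j).toNat)
    have hk : p.2 = q.2 := by
      rcases Nat.lt_trichotomy p.2 q.2 with h | h | h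
      · have := hDgap p.2 q.2 h; omega
      · exact h
      · have := hDgap q.2 p.2 h; omega
    have hr : srho d M (fun j => ((p.1 : Fin d → ℤ) j).toNat)
        = srho d M (fun j => ((q.1 : Fin d → ℤ) j).toNat) := by
      rw [hk] at hpq; omega
    have hfun := srho_inj d (by omega) M _ _
      (hν_lt _ p.1.2) (hν_lt _ q.1.2) hr
    have hn : (p.1 : Fin d → ℤ) = (q.1 : Fin d → ℤ) := by
      rw [← hν_cast _ p.1.2, ← hν_cast _ q.1.2]
      exact congrArg (fun w : Fin d → ℕ => (fun j => ((w j : ℕ) : ℤ))) hfun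
    exact Prod.ext (Subtype.ext hn) hk
  -- analytic facts
  have hgeom : Summable (fun t : ℕ => (1/3 : ℝ) ^ t) :=
    summable_geometric_of_lt_one (by norm_num) (by norm_num)
  have hsf : Summable (fun p : {n // n ∈ B} × ℕ => (1/3 : ℝ) ^ (e p)) :=
    hgeom.comp_injective einj
  have hslice : ∀ b : {n // n ∈ B}, Summable (fun k : ℕ => (1/3 : ℝ) ^ (e (b, k))) := by
    intro b
    exact hgeom.comp_injective (einj.comp (fun k k' h => congrArg Prod.snd h))
  -- per-term identity
  have hterm : ∀ n ∈ B, ∀ k : ℕ, (3:ℝ) ^ (-(pm d (M+1+k) n))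
      = (3:ℝ) ^ (-(E:ℤ)) * (1/3 : ℝ) ^ (D k + srho d M (fun j => (n j).toNat)) := by
    intro n hn k
    rw [hpm n hn k, neg_add, zpow_add₀ (by norm_num : (3:ℝ) ≠ 0)]
    congr 1
    rw [zpow_neg, zpow_natCast, one_div, inv_pow]
  -- core bound
  have hcore : ∑ n ∈ B, ∑' k : ℕ, (1/3 : ℝ) ^ (D k + srho d M (fun j => (n j).toNat))
      ≤ 3/2 := by
    have h1 : ∑ n ∈ B, ∑' k : ℕ, (1/3 : ℝ) ^ (D k + srho d M (fun j => (n j).toNat))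
        = ∑' (p : {n // n ∈ B} × ℕ), (1/3 : ℝ) ^ (e p) := by
      rw [Summable.tsum_prod' hsf hslice, tsum_fintype]
      exact (Finset.sum_coe_sort B
        (fun n => ∑' k : ℕ, (1/3 : ℝ) ^ (D k + srho d M (fun j => (n j).toNat)))).symm
    have h2 : ∑' (p : {n // n ∈ B} × ℕ), (1/3 : ℝ) ^ (e p) ≤ ∑' t : ℕ, (1/3 : ℝ) ^ t :=
      Summable.tsum_le_tsum_of_inj e einj (fun c _ => by positivity) (fun p => le_rfl) hsf hgeom
    have h3 : ∑' t : ℕ, (1/3 : ℝ) ^ t = 3/2 := by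
      rw [tsum_geometric_of_lt_one (by norm_num) (by norm_num)]
      norm_num
    rw [h1]
    rw [h3] at h2
    exact h2
  calc ∑ n ∈ B, ∑' k : ℕ, (3:ℝ) ^ (-(pm d (M+1+k) n))
      = ∑ n ∈ B, (3:ℝ) ^ (-(E:ℤ)) *
          ∑' k : ℕ, (1/3 : ℝ) ^ (D k + srho d M (fun j => (n j).toNat)) := by
        apply Finset.sum_congr rfl
        intro n hn
        rw [← tsum_mul_left]
        exact tsum_congr fun k => hterm n hn k
    _ = (3:ℝ) ^ (-(E:ℤ)) * ∑ n ∈ B,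
          ∑' k : ℕ, (1/3 : ℝ) ^ (D k + srho d M (fun j => (n j).toNat)) := by
        rw [Finset.mul_sum]
    _ ≤ (3:ℝ) ^ (-(E:ℤ)) * (3/2) := by
        apply mul_le_mul_of_nonneg_left hcore (by positivity)
    _ = (3/2) * (3:ℝ) ^ (-(E:ℤ)) := by ring
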